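/- arXiv:1808.04515 — 2 statements merged into one kernel-verified Lean document; each statement's English description precedes it below -/
import Mathlib

section
/- Let X ∈ ℝ^{n×m} and let k ≥ rank(X). Then the infimum of (1/2)(‖L‖_F² + ‖R‖_F²) over all factorizations L ∈ ℝ^{n×k}, R ∈ ℝ^{m×k} with X = L Rᵀ is attained and equals ‖X‖_*. -/
open Matrix

/-- Frobenius norm of a real matrix. -/
noncomputable def frobNorm {n m : ℕ} (X : Matrix (Fin n) (Fin m) ℝ) : ℝ :=
  Real.sqrt (∑ i, ∑ j, (X i j) ^ 2)

/-- Nuclear norm of a real matrix: the sum of its singular values, i.e. the square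
roots of the eigenvalues of the positive semidefinite matrix `Xᵀ X` (over `ℝ`,
`Xᴴ = Xᵀ`). -/
noncomputable def nucNorm {n m : ℕ} (X : Matrix (Fin n) (Fin m) ℝ) : ℝ :=
  ∑ j, Real.sqrt ((Matrix.isHermitian_conjTranspose_mul_self X).eigenvalues j)

/-- Euclidean (l²) norm on `ℝ^q`. -/
noncomputable def l2 {q : ℕ} (v : Fin q → ℝ) : ℝ :=
  Real.sqrt (∑ i, (v i) ^ 2)

lemma aux_dot_mulVec {n m : ℕ} (A : Matrix (Fin n) (Fin m) ℝ) (v : Fin n → ℝ) (w : Fin m → ℝ) :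
    v ⬝ᵥ (A *ᵥ w) = (Aᵀ *ᵥ v) ⬝ᵥ w := by
  simp only [dotProduct, mulVec, dotProduct, transpose_apply, Finset.mul_sum, Finset.sum_mul]
  rw [Finset.sum_comm]
  exact Finset.sum_congr rfl fun j _ => Finset.sum_congr rfl fun i _ => by ring

lemma aux_frob_sq {n m : ℕ} (M : Matrix (Fin n) (Fin m) ℝ) :
    frobNorm M ^ 2 = ∑ i, ∑ j, (M i j) ^ 2 :=
  Real.sq_sqrt (Finset.sum_nonneg fun _ _ => Finset.sum_nonneg fun _ _ => sq_nonneg _)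

lemma aux_frob_sq_trace {n m : ℕ} (M : Matrix (Fin n) (Fin m) ℝ) :
    frobNorm M ^ 2 = (Mᵀ * M).trace := by
  rw [aux_frob_sq, Matrix.trace, Finset.sum_comm]
  simp [Matrix.diag, Matrix.mul_apply, sq]

lemma aux_bessel {n : ℕ} {ι : Type*} [Fintype ι] [DecidableEq ι] (p : ι → Fin n → ℝ)
    (hp : ∀ i j, p i ⬝ᵥ p j = if i = j then 1 else 0) (v : Fin n → ℝ) :
    ∑ j, (p j ⬝ᵥ v) ^ 2 ≤ ∑ i, v i ^ 2 := by
  set P : ι → EuclideanSpace ℝ (Fin n) := fun j => (WithLp.equiv 2 _).symm (p j) with hP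
  set w : EuclideanSpace ℝ (Fin n) := (WithLp.equiv 2 _).symm v with hw
  have hinner : ∀ (x : EuclideanSpace ℝ (Fin n)) (y : EuclideanSpace ℝ (Fin n)),
      (inner ℝ x y : ℝ) = ∑ i, x i * y i := by
    intro x y
    simp [PiLp.inner_apply, mul_comm]
  have horth : Orthonormal ℝ P := by
    rw [orthonormal_iff_ite]
    intro i j
    rw [hinner]
    exact hp i j
  have hb := horth.sum_inner_products_le (x := w) (s := Finset.univ)
  have h1 : ∀ j, (inner ℝ (P j) w : ℝ) = p j ⬝ᵥ v := fun j => hinner _ _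
  have h2 : ‖w‖ ^ 2 = ∑ i, v i ^ 2 := by
    rw [EuclideanSpace.norm_eq, Real.sq_sqrt (Finset.sum_nonneg fun _ _ => sq_nonneg _)]
    simp only [Real.norm_eq_abs, sq_abs]
    rfl
  calc ∑ j, (p j ⬝ᵥ v) ^ 2 = ∑ j, ‖(inner ℝ (P j) w : ℝ)‖ ^ 2 := by
        simp [h1, sq_abs]
    _ ≤ ‖w‖ ^ 2 := hb
    _ = ∑ i, v i ^ 2 := h2

/-- Let `X ∈ ℝ^{n×m}` and `k ≥ rank X`. Then the infimum of `(1/2)(‖L‖_F² + ‖R‖_F²)`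
over all factorizations `X = L Rᵀ` with `L ∈ ℝ^{n×k}`, `R ∈ ℝ^{m×k}` is attained and
equals `‖X‖_*`. -/
theorem nucNorm_eq_min_factorization (n m k : ℕ) (X : Matrix (Fin n) (Fin m) ℝ)
    (hk : X.rank ≤ k) :
    IsLeast {c : ℝ | ∃ (L : Matrix (Fin n) (Fin k) ℝ) (R : Matrix (Fin m) (Fin k) ℝ),
        X = L * Rᵀ ∧ c = (1 / 2) * (frobNorm L ^ 2 + frobNorm R ^ 2)}
      (nucNorm X) := by
  classical
  have hH := Matrix.isHermitian_conjTranspose_mul_self X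
  set lam : Fin m → ℝ := hH.eigenvalues with hlam
  set q : Fin m → Fin m → ℝ := fun j => ⇑(hH.eigenvectorBasis j) with hq
  have hlam0 : ∀ j, 0 ≤ lam j := fun j =>
    Matrix.eigenvalues_conjTranspose_mul_self_nonneg X j
  have hXt : Xᴴ = Xᵀ := Matrix.conjTranspose_eq_transpose_of_trivial X
  have hmv : ∀ j, (Xᵀ * X) *ᵥ q j = lam j • q j := by
    intro j
    rw [← hXt]
    exact hH.mulVec_eigenvectorBasis j
  -- orthonormality of q
  have hqq : ∀ i j, q i ⬝ᵥ q j = if i = j then 1 else 0 := by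
    have horth := hH.eigenvectorBasis.orthonormal
    rw [orthonormal_iff_ite] at horth
    intro i j
    have h := horth i j
    rw [PiLp.inner_apply] at h
    simpa [dotProduct, hq, mul_comm] using h
  -- products of X with eigenvectors
  have hXq : ∀ a b : Fin m → ℝ, (X *ᵥ a) ⬝ᵥ (X *ᵥ b) = ((Xᵀ * X) *ᵥ b) ⬝ᵥ a := by
    intro a b
    rw [dotProduct_comm, aux_dot_mulVec, Matrix.mulVec_mulVec]
  have hXqq : ∀ i j, (X *ᵥ q i) ⬝ᵥ (X *ᵥ q j) = if i = j then lam i else 0 := by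
    intro i j
    rw [hXq, hmv, smul_dotProduct, hqq, smul_eq_mul]
    by_cases h : i = j <;> simp [h, eq_comm]
  have hXzero : ∀ j, lam j = 0 → X *ᵥ q j = 0 := by
    intro j hj
    have h := hXqq j j
    rw [if_pos rfl, hj] at h
    funext i
    have hsum : ∑ t, (X *ᵥ q j) t ^ 2 = 0 := by
      rw [← h]
      simp [dotProduct, sq]
    have := (Finset.sum_eq_zero_iff_of_nonneg (fun t _ => sq_nonneg ((X *ᵥ q j) t))).mp hsum
      i (Finset.mem_univ i)
    exact pow_eq_zero_iff (two_ne_zero) |>.mp this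
  -- completeness of q
  have hcomp : ∀ a b, (∑ j, q j a * q j b) = if a = b then 1 else 0 := by
    have h1 : (Matrix.of fun a j => q j a)ᵀ * (Matrix.of fun a j => q j a) = 1 := by
      ext i j
      rw [Matrix.mul_apply, Matrix.one_apply]
      simpa [dotProduct] using hqq i j
    have h2 := mul_eq_one_comm.mp h1
    intro a b
    have h3 := congrFun (congrFun h2 a) b
    rw [Matrix.mul_apply, Matrix.one_apply] at h3
    simpa using h3
  -- expansion of X via eigenvectors
  have hexp : ∀ i i', X i i' = ∑ j, (X *ᵥ q j) i * q j i' := by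
    intro i i'
    calc X i i' = ∑ t, X i t * (if t = i' then 1 else 0) := by simp
      _ = ∑ t, X i t * (∑ j, q j t * q j i') := by
          refine Finset.sum_congr rfl fun t _ => ?_
          rw [hcomp]
      _ = ∑ t, ∑ j, X i t * (q j t * q j i') := by
          refine Finset.sum_congr rfl fun t _ => ?_
          rw [Finset.mul_sum]
      _ = ∑ j, ∑ t, X i t * (q j t * q j i') := Finset.sum_comm
      _ = ∑ j, (X *ᵥ q j) i * q j i' := by
          refine Finset.sum_congr rfl fun j _ => ?_
          simp only [Matrix.mulVec, dotProduct, Finset.sum_mul]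
          exact Finset.sum_congr rfl fun t _ => by ring
  -- restriction to the support
  have hsubty : ∀ f : Fin m → ℝ, (∀ j, lam j = 0 → f j = 0) →
      ∑ j, f j = ∑ j : {j : Fin m // lam j ≠ 0}, f j.1 := by
    intro f hf
    rw [← Finset.sum_subtype (Finset.univ.filter fun j => lam j ≠ 0)
        (fun x => by simp) f]
    rw [Finset.sum_filter_of_ne]
    intro x _ hx h0
    exact hx (hf x h0)
  have hnucT : nucNorm X = ∑ j : {j : Fin m // lam j ≠ 0}, Real.sqrt (lam j.1) := by
    have : nucNorm X = ∑ j, Real.sqrt (lam j) := rfl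
    rw [this]
    refine hsubty _ fun j hj => ?_
    rw [hj, Real.sqrt_zero]
  have hlampos : ∀ j : {j : Fin m // lam j ≠ 0}, 0 < lam j.1 :=
    fun j => lt_of_le_of_ne (hlam0 j.1) (Ne.symm j.2)
  have hsp : ∀ j : {j : Fin m // lam j ≠ 0}, 0 < Real.sqrt (lam j.1) :=
    fun j => Real.sqrt_pos.mpr (hlampos j)
  have hkey : ∀ j : {j : Fin m // lam j ≠ 0},
      (Real.sqrt (lam j.1))⁻¹ * lam j.1 = Real.sqrt (lam j.1) := by
    intro j
    nth_rewrite 2 [← Real.mul_self_sqrt (hlam0 j.1)]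
    rw [← mul_assoc, inv_mul_cancel₀ (hsp j).ne', one_mul]
  constructor
  · -- membership : construct the optimal factorization
    have hcardT : Fintype.card {j : Fin m // lam j ≠ 0} ≤ k := by
      have h1 := hH.rank_eq_card_non_zero_eigs
      have h0 : (Xᴴ * X).rank = X.rank := by
        rw [hXt]
        exact Matrix.rank_transpose_mul_self X
      exact le_of_eq_of_le (h1.symm.trans h0) hk
    obtain ⟨e⟩ := Function.Embedding.nonempty_of_card_le
      (α := {j : Fin m // lam j ≠ 0}) (β := Fin k) (by simpa using hcardT)
    set u : {j : Fin m // lam j ≠ 0} → ℝ := fun j => Real.sqrt (Real.sqrt (lam j.1)) with hu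
    have hupos : ∀ j, 0 < u j := fun j => Real.sqrt_pos.mpr (hsp j)
    have husq : ∀ j, u j ^ 2 = Real.sqrt (lam j.1) := fun j => Real.sq_sqrt (Real.sqrt_nonneg _)
    set A : Matrix (Fin n) {j : Fin m // lam j ≠ 0} ℝ :=
      Matrix.of (fun i j => (u j)⁻¹ * (X *ᵥ q j.1) i) with hA
    set B : Matrix (Fin m) {j : Fin m // lam j ≠ 0} ℝ :=
      Matrix.of (fun i j => u j * q j.1 i) with hB
    set P : Matrix {j : Fin m // lam j ≠ 0} (Fin k) ℝ :=
      Matrix.of (fun j c => if e j = c then 1 else 0) with hP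
    have hPPt : P * Pᵀ = 1 := by
      ext j j'
      rw [Matrix.mul_apply, Matrix.one_apply]
      simp only [hP, Matrix.transpose_apply, Matrix.of_apply, ite_mul, one_mul, zero_mul]
      rw [Finset.sum_ite_eq Finset.univ (e j) (fun c => if e j' = c then 1 else 0)]
      simp [e.injective.eq_iff, eq_comm]
    -- traces after multiplication by P
    have htr : ∀ (d : ℕ) (M : Matrix (Fin d) {j : Fin m // lam j ≠ 0} ℝ),
        frobNorm (M * P) ^ 2 = ∑ j : {j : Fin m // lam j ≠ 0}, ∑ i, (M i j) ^ 2 := by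
      intro d M
      rw [aux_frob_sq_trace, Matrix.transpose_mul]
      have : Pᵀ * Mᵀ * (M * P) = Pᵀ * ((Mᵀ * M) * P) := by
        rw [Matrix.mul_assoc, Matrix.mul_assoc]
      rw [this, ← Matrix.trace_mul_comm, Matrix.mul_assoc, hPPt, Matrix.mul_one]
      rw [Matrix.trace]
      refine Finset.sum_congr rfl fun j _ => ?_
      simp [Matrix.diag, Matrix.mul_apply, sq]
    refine ⟨A * P, B * P, ?_, ?_⟩
    · -- X = (A*P) * (B*P)ᵀ
      have hABt : (A * P) * (B * P)ᵀ = A * Bᵀ := by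
        rw [Matrix.transpose_mul, Matrix.mul_assoc, ← Matrix.mul_assoc P, hPPt,
          Matrix.one_mul]
      rw [hABt]
      ext i i'
      rw [Matrix.mul_apply]
      have hterm : ∀ j : {j : Fin m // lam j ≠ 0},
          A i j * Bᵀ j i' = (X *ᵥ q j.1) i * q j.1 i' := by
        intro j
        simp only [hA, hB, Matrix.transpose_apply, Matrix.of_apply]
        have := (hupos j).ne'
        field_simp
      rw [Finset.sum_congr rfl (fun j _ => hterm j)]
      rw [hexp i i', hsubty (fun j => (X *ᵥ q j) i * q j i')
        (fun j hj => by show (X *ᵥ q j) i * q j i' = 0; rw [hXzero j hj]; simp)]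
    · -- value of the objective
      have hfA : frobNorm (A * P) ^ 2 = ∑ j : {j : Fin m // lam j ≠ 0}, Real.sqrt (lam j.1) := by
        rw [htr n A]
        refine Finset.sum_congr rfl fun j _ => ?_
        have hXqj : ∑ i, ((X *ᵥ q j.1) i) ^ 2 = lam j.1 := by
          have h := hXqq j.1 j.1
          rw [if_pos rfl] at h
          rw [← h]
          simp [dotProduct, sq]
        simp only [hA, Matrix.of_apply, mul_pow]
        rw [← Finset.mul_sum, hXqj, inv_pow, husq j]
        exact hkey j
      have hfB : frobNorm (B * P) ^ 2 = ∑ j : {j : Fin m // lam j ≠ 0}, Real.sqrt (lam j.1) := by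
        rw [htr m B]
        refine Finset.sum_congr rfl fun j _ => ?_
        have hqj : ∑ i, (q j.1 i) ^ 2 = 1 := by
          have h := hqq j.1 j.1
          rw [if_pos rfl] at h
          rw [← h]
          simp [dotProduct, sq]
        simp only [hB, Matrix.of_apply, mul_pow]
        rw [← Finset.mul_sum, hqj, mul_one, husq j]
      rw [hfA, hfB, hnucT]
      ring
  · -- lower bound
    rintro c ⟨L, R, hXf, rfl⟩
    rw [hnucT]
    set p : {j : Fin m // lam j ≠ 0} → Fin n → ℝ :=
      fun j => (Real.sqrt (lam j.1))⁻¹ • (X *ᵥ q j.1) with hp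
    have hporth : ∀ i j : {j : Fin m // lam j ≠ 0}, p i ⬝ᵥ p j = if i = j then 1 else 0 := by
      intro i j
      simp only [hp, smul_dotProduct, dotProduct_smul, smul_eq_mul]
      rw [hXqq]
      by_cases h : i = j
      · subst h
        rw [if_pos rfl, if_pos rfl, hkey i]
        exact inv_mul_cancel₀ (hsp i).ne'
      · have h' : i.1 ≠ j.1 := fun hh => h (Subtype.ext hh)
        rw [if_neg h', if_neg h]
        ring
    have hqqT : ∀ i j : {j : Fin m // lam j ≠ 0},
        q i.1 ⬝ᵥ q j.1 = if i = j then 1 else 0 := by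
      intro i j
      rw [hqq]
      by_cases h : i = j
      · simp [h]
      · have h' : i.1 ≠ j.1 := fun hh => h (Subtype.ext hh)
        simp [h, h']
    have hsig : ∀ j : {j : Fin m // lam j ≠ 0},
        Real.sqrt (lam j.1) = (Lᵀ *ᵥ p j) ⬝ᵥ (Rᵀ *ᵥ q j.1) := by
      intro j
      rw [← aux_dot_mulVec, Matrix.mulVec_mulVec, ← hXf]
      simp only [hp, smul_dotProduct, smul_eq_mul]
      have h := hXqq j.1 j.1
      rw [if_pos rfl] at h
      rw [h]
      exact (hkey j).symm
    have hL : ∑ j : {j : Fin m // lam j ≠ 0}, ∑ c, ((Lᵀ *ᵥ p j) c) ^ 2 ≤ frobNorm L ^ 2 := by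
      rw [aux_frob_sq L, Finset.sum_comm]
      rw [show (∑ i, ∑ c, (L i c) ^ 2) = ∑ c, ∑ i, (L i c) ^ 2 from Finset.sum_comm]
      refine Finset.sum_le_sum fun c _ => ?_
      have hb := aux_bessel p hporth (fun i => L i c)
      calc ∑ j : {j : Fin m // lam j ≠ 0}, ((Lᵀ *ᵥ p j) c) ^ 2
          = ∑ j : {j : Fin m // lam j ≠ 0}, (p j ⬝ᵥ fun i => L i c) ^ 2 := by
            refine Finset.sum_congr rfl fun j _ => ?_
            congr 1
            simp only [Matrix.mulVec, dotProduct, Matrix.transpose_apply]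
            exact Finset.sum_congr rfl fun i _ => by ring
        _ ≤ ∑ i, (L i c) ^ 2 := hb
    have hR : ∑ j : {j : Fin m // lam j ≠ 0}, ∑ c, ((Rᵀ *ᵥ q j.1) c) ^ 2 ≤ frobNorm R ^ 2 := by
      rw [aux_frob_sq R, Finset.sum_comm]
      rw [show (∑ i, ∑ c, (R i c) ^ 2) = ∑ c, ∑ i, (R i c) ^ 2 from Finset.sum_comm]
      refine Finset.sum_le_sum fun c _ => ?_
      have hb := aux_bessel (fun j : {j : Fin m // lam j ≠ 0} => q j.1) hqqT (fun i => R i c)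
      calc ∑ j : {j : Fin m // lam j ≠ 0}, ((Rᵀ *ᵥ q j.1) c) ^ 2
          = ∑ j : {j : Fin m // lam j ≠ 0}, ((fun j' : {j : Fin m // lam j ≠ 0} => q j'.1) j ⬝ᵥ fun i => R i c) ^ 2 := by
            refine Finset.sum_congr rfl fun j _ => ?_
            congr 1
            simp only [Matrix.mulVec, dotProduct, Matrix.transpose_apply]
            exact Finset.sum_congr rfl fun i _ => by ring
        _ ≤ ∑ i, (R i c) ^ 2 := hb
    calc ∑ j : {j : Fin m // lam j ≠ 0}, Real.sqrt (lam j.1)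
        = ∑ j : {j : Fin m // lam j ≠ 0}, (Lᵀ *ᵥ p j) ⬝ᵥ (Rᵀ *ᵥ q j.1) :=
          Finset.sum_congr rfl fun j _ => hsig j
      _ ≤ ∑ j : {j : Fin m // lam j ≠ 0},
            (1 / 2) * ((∑ c, ((Lᵀ *ᵥ p j) c) ^ 2) + (∑ c, ((Rᵀ *ᵥ q j.1) c) ^ 2)) := by
          refine Finset.sum_le_sum fun j _ => ?_
          rw [dotProduct]
          calc ∑ i, (Lᵀ *ᵥ p j) i * (Rᵀ *ᵥ q j.1) i
              ≤ ∑ i, (1 / 2) * (((Lᵀ *ᵥ p j) i) ^ 2 + ((Rᵀ *ᵥ q j.1) i) ^ 2) := by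
                refine Finset.sum_le_sum fun i _ => ?_
                nlinarith [sq_nonneg ((Lᵀ *ᵥ p j) i - (Rᵀ *ᵥ q j.1) i)]
            _ = (1 / 2) * ((∑ c, ((Lᵀ *ᵥ p j) c) ^ 2) + (∑ c, ((Rᵀ *ᵥ q j.1) c) ^ 2)) := by
                rw [← Finset.mul_sum, Finset.sum_add_distrib]
      _ = (1 / 2) * ((∑ j : {j : Fin m // lam j ≠ 0}, ∑ c, ((Lᵀ *ᵥ p j) c) ^ 2)
            + (∑ j : {j : Fin m // lam j ≠ 0}, ∑ c, ((Rᵀ *ᵥ q j.1) c) ^ 2)) := by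
          rw [← Finset.sum_add_distrib, Finset.mul_sum]
      _ ≤ (1 / 2) * (frobNorm L ^ 2 + frobNorm R ^ 2) := by
          have := hL; have := hR; linarith
end

section
/- Let 𝒜 : ℝ^{n×m} → ℝ^q be a linear map, b ∈ ℝ^q, σ ≥ 0, and set k = min(n,m). If the feasible set {X : ‖𝒜(X) − b‖₂ ≤ σ} is nonempty, then the optimal value of the nuclear-norm Morozov problem inf{ ‖X‖_* : ‖𝒜(X) − b‖₂ ≤ σ } equals the optimal value of its factorized version inf{ (1/2)‖L‖_F² + (1/2)‖R‖_F² : L ∈ ℝ^{n×k}, R ∈ ℝ^{m×k}, ‖𝒜(L Rᵀ) − b‖₂ ≤ σ }. -/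
open Matrix

namespace MorozovAux

/-- Sum of squares of the entries of a matrix. -/
def sumsq {a b : ℕ} (M : Matrix (Fin a) (Fin b) ℝ) : ℝ := ∑ i, ∑ j, (M i j) ^ 2

lemma sumsq_nonneg {a b : ℕ} (M : Matrix (Fin a) (Fin b) ℝ) : 0 ≤ sumsq M :=
  Finset.sum_nonneg fun _ _ => Finset.sum_nonneg fun _ _ => sq_nonneg _

lemma frobNorm_sq {a b : ℕ} (M : Matrix (Fin a) (Fin b) ℝ) : frobNorm M ^ 2 = sumsq M :=
  Real.sq_sqrt (sumsq_nonneg M)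

lemma trace_transpose_mul {a b : ℕ} (M : Matrix (Fin a) (Fin b) ℝ) :
    trace (Mᵀ * M) = sumsq M := by
  rw [trace, sumsq, Finset.sum_comm]
  simp [Matrix.diag, Matrix.mul_apply, sq]

lemma sumsq_transpose {a b : ℕ} (M : Matrix (Fin a) (Fin b) ℝ) : sumsq Mᵀ = sumsq M := by
  rw [sumsq, sumsq, Finset.sum_comm]; rfl

lemma nucNorm_nonneg {n m : ℕ} (X : Matrix (Fin n) (Fin m) ℝ) : 0 ≤ nucNorm X :=
  Finset.sum_nonneg fun _ _ => Real.sqrt_nonneg _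

/-- Core content of the singular value decomposition needed for this file. -/
lemma svd_core {n m : ℕ} (X : Matrix (Fin n) (Fin m) ℝ) :
    ∃ (V : Matrix (Fin m) (Fin m) ℝ) (μ : Fin m → ℝ),
      V * Vᵀ = 1 ∧ Vᵀ * V = 1 ∧ (X * V)ᵀ * (X * V) = diagonal μ ∧ (∀ j, 0 ≤ μ j) ∧
      (∑ j, Real.sqrt (μ j)) = nucNorm X ∧
      (Finset.univ.filter (fun j => μ j ≠ 0)).card ≤ min n m := by
  have hH := Matrix.isHermitian_conjTranspose_mul_self X
  set V : Matrix (Fin m) (Fin m) ℝ := (hH.eigenvectorUnitary : Matrix (Fin m) (Fin m) ℝ) with hV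
  have hmem := hH.eigenvectorUnitary.2
  have hstar : star V = Vᵀ := by
    rw [Matrix.star_eq_conjTranspose, Matrix.conjTranspose_eq_transpose_of_trivial]
  have h1 : V * Vᵀ = 1 := by rw [← hstar]; exact (Matrix.mem_unitaryGroup_iff).mp hmem
  have h2 : Vᵀ * V = 1 := by rw [← hstar]; exact (Matrix.mem_unitaryGroup_iff').mp hmem
  refine ⟨V, hH.eigenvalues, h1, h2, ?_, ?_, ?_, ?_⟩
  · have hdiag : star V * (Xᴴ * X) * V = diagonal (RCLike.ofReal ∘ hH.eigenvalues) := by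
      have h := hH.conjStarAlgAut_star_eigenvectorUnitary
      rw [Unitary.conjStarAlgAut_apply, Unitary.coe_star, star_star] at h
      exact h
    rw [hstar] at hdiag
    calc (X * V)ᵀ * (X * V) = Vᵀ * (Xᴴ * X) * V := by
          rw [Matrix.conjTranspose_eq_transpose_of_trivial, Matrix.transpose_mul]
          simp only [Matrix.mul_assoc]
      _ = diagonal (RCLike.ofReal ∘ hH.eigenvalues) := hdiag
      _ = diagonal hH.eigenvalues := by congr 1
  · exact Matrix.eigenvalues_conjTranspose_mul_self_nonneg X
  · rfl
  · rw [← Fintype.card_subtype, ← hH.rank_eq_card_non_zero_eigs]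
    rw [Matrix.conjTranspose_eq_transpose_of_trivial, Matrix.rank_transpose_mul_self]
    exact le_min (Matrix.rank_le_height X) (Matrix.rank_le_width X)

/-- Existence of a factorization `X = L Rᵀ` with cost `nucNorm X`, with only
few nonzero columns. -/
lemma factor_raw {n m : ℕ} (X : Matrix (Fin n) (Fin m) ℝ) :
    ∃ (L : Matrix (Fin n) (Fin m) ℝ) (R : Matrix (Fin m) (Fin m) ℝ)
      (T : Finset (Fin m)),
      L * Rᵀ = X ∧ sumsq L = nucNorm X ∧ sumsq R = nucNorm X ∧
      T.card ≤ min n m ∧ (∀ j ∉ T, ∀ i, L i j = 0) ∧ (∀ j ∉ T, ∀ i, R i j = 0) := by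
  obtain ⟨V, μ, h1, h2, hUU, hμ, hsum, hcard⟩ := svd_core X
  set U : Matrix (Fin n) (Fin m) ℝ := X * V with hU
  set g : Fin m → ℝ := fun j => if μ j = 0 then 0 else (Real.sqrt (μ j))⁻¹ with hg
  set r : Fin m → ℝ := fun j => Real.sqrt (Real.sqrt (μ j)) with hr
  have hdiag : ∀ j, ∑ i, (U i j) ^ 2 = μ j := by
    intro j
    have h := congrFun (congrFun hUU j) j
    rw [Matrix.mul_apply] at h
    simp only [Matrix.transpose_apply, Matrix.diagonal_apply_eq] at h
    rw [← h]
    exact Finset.sum_congr rfl fun i _ => by ring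
  have hUcol : ∀ j, μ j = 0 → ∀ i, U i j = 0 := by
    intro j hj i
    have h := (Finset.sum_eq_zero_iff_of_nonneg (fun i _ => sq_nonneg (U i j))).mp
      ((hdiag j).trans hj) i (Finset.mem_univ i)
    exact pow_eq_zero_iff (two_ne_zero) |>.mp h
  refine ⟨U * diagonal (fun j => g j * r j), V * diagonal r,
    Finset.univ.filter (fun j => μ j ≠ 0), ?_, ?_, ?_, hcard, ?_, ?_⟩
  · -- L * Rᵀ = X
    have key : U * diagonal (fun j => g j * r j * r j) = U := by
      ext i j
      rw [Matrix.mul_diagonal]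
      by_cases hj : μ j = 0
      · simp [hUcol j hj i]
      · have hs : Real.sqrt (μ j) ≠ 0 :=
          Real.sqrt_ne_zero'.mpr ((hμ j).lt_of_ne (Ne.symm hj))
        have hgj : g j = (Real.sqrt (μ j))⁻¹ := if_neg hj
        have : g j * r j * r j = 1 := by
          rw [hgj, hr, mul_assoc, Real.mul_self_sqrt (Real.sqrt_nonneg _)]
          exact inv_mul_cancel₀ hs
        rw [this, mul_one]
    calc U * diagonal (fun j => g j * r j) * (V * diagonal r)ᵀ
        = U * (diagonal (fun j => g j * r j) * (diagonal r * Vᵀ)) := by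
          rw [Matrix.transpose_mul, Matrix.diagonal_transpose, Matrix.mul_assoc]
      _ = U * diagonal (fun j => g j * r j * r j) * Vᵀ := by
          rw [← Matrix.mul_assoc (diagonal fun j => g j * r j) (diagonal r) Vᵀ,
            Matrix.diagonal_mul_diagonal, ← Matrix.mul_assoc]
      _ = X * (V * Vᵀ) := by rw [key, hU, Matrix.mul_assoc]
      _ = X := by rw [h1, Matrix.mul_one]
  · -- sumsq L
    rw [← hsum, sumsq]
    rw [show (∑ i, ∑ j, (U * diagonal (fun j => g j * r j)) i j ^ 2)
        = ∑ j, (∑ i, (U i j) ^ 2) * (g j * r j) ^ 2 by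
      rw [Finset.sum_comm]
      refine Finset.sum_congr rfl fun j _ => ?_
      rw [Finset.sum_mul]
      exact Finset.sum_congr rfl fun i _ => by rw [Matrix.mul_diagonal]; ring]
    refine Finset.sum_congr rfl fun j _ => ?_
    rw [hdiag j]
    by_cases hj : μ j = 0
    · simp [hj]
    · have hs : Real.sqrt (μ j) ≠ 0 :=
        Real.sqrt_ne_zero'.mpr ((hμ j).lt_of_ne (Ne.symm hj))
      have hgj : g j = (Real.sqrt (μ j))⁻¹ := if_neg hj
      have hrr : (r j) ^ 2 = Real.sqrt (μ j) := Real.sq_sqrt (Real.sqrt_nonneg _)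
      have hss : Real.sqrt (μ j) ^ 2 = μ j := Real.sq_sqrt (hμ j)
      rw [hgj, mul_pow, hrr]
      field_simp
      nlinarith [hss]
  · -- sumsq R
    rw [← hsum, sumsq]
    rw [show (∑ i, ∑ j, (V * diagonal r) i j ^ 2) = ∑ j, (∑ i, (V i j) ^ 2) * (r j) ^ 2 by
      rw [Finset.sum_comm]
      refine Finset.sum_congr rfl fun j _ => ?_
      rw [Finset.sum_mul]
      exact Finset.sum_congr rfl fun i _ => by rw [Matrix.mul_diagonal]; ring]
    refine Finset.sum_congr rfl fun j _ => ?_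
    have hcols : ∑ i, (V i j) ^ 2 = 1 := by
      have h := congrFun (congrFun h2 j) j
      rw [Matrix.mul_apply] at h
      simp only [Matrix.transpose_apply, Matrix.one_apply_eq] at h
      rw [← h]
      exact Finset.sum_congr rfl fun i _ => by ring
    rw [hcols, one_mul, hr, Real.sq_sqrt (Real.sqrt_nonneg _)]
  · -- L columns vanish off T
    intro j hj i
    rw [Finset.mem_filter] at hj
    push_neg at hj
    have hj0 : μ j = 0 := by by_contra h; exact h (hj (Finset.mem_univ j))
    rw [Matrix.mul_diagonal, hUcol j hj0 i, zero_mul]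
  · -- R columns vanish off T
    intro j hj i
    rw [Finset.mem_filter] at hj
    push_neg at hj
    have hj0 : μ j = 0 := by by_contra h; exact h (hj (Finset.mem_univ j))
    rw [Matrix.mul_diagonal, hr]
    simp [hj0]

/-- Compress a factorization whose nonzero columns fit in `Fin k`. -/
lemma compress {a b p k : ℕ} (L : Matrix (Fin a) (Fin p) ℝ) (R : Matrix (Fin b) (Fin p) ℝ)
    (T : Finset (Fin p)) (hT : T.card ≤ k)
    (hL : ∀ j ∉ T, ∀ i, L i j = 0) (hR : ∀ j ∉ T, ∀ i, R i j = 0) :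
    ∃ (L' : Matrix (Fin a) (Fin k) ℝ) (R' : Matrix (Fin b) (Fin k) ℝ),
      L' * R'ᵀ = L * Rᵀ ∧ sumsq L' = sumsq L ∧ sumsq R' = sumsq R := by
  classical
  set o := T.orderIsoOfFin rfl with ho
  set L' : Matrix (Fin a) (Fin k) ℝ :=
    fun i c => if h : (c : ℕ) < T.card then L i (o ⟨c, h⟩) else 0 with hL'
  set R' : Matrix (Fin b) (Fin k) ℝ :=
    fun i c => if h : (c : ℕ) < T.card then R i (o ⟨c, h⟩) else 0 with hR'
  have key : ∀ (F : Fin p → ℝ), (∀ j ∉ T, F j = 0) →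
      (∑ c : Fin k, if h : (c : ℕ) < T.card then F (o ⟨c, h⟩) else 0) =
        Finset.univ.sum F := by
    intro F hF
    set G : ℕ → ℝ := fun x => if h : x < T.card then F (o ⟨x, h⟩) else 0 with hG
    calc (∑ c : Fin k, if h : (c : ℕ) < T.card then F (o ⟨c, h⟩) else 0)
        = ∑ x ∈ Finset.range k, G x := Fin.sum_univ_eq_sum_range G k
      _ = ∑ x ∈ Finset.range T.card, G x :=
          (Finset.sum_subset (Finset.range_subset_range.mpr hT)
            (fun x _ hx => dif_neg (by simpa using hx))).symm
      _ = ∑ d : Fin T.card, G (d : ℕ) := (Fin.sum_univ_eq_sum_range G T.card).symm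
      _ = ∑ d : Fin T.card, F (o d) := by
          refine Finset.sum_congr rfl fun d _ => ?_
          rw [hG]
          simp only [Fin.eta, Fin.is_lt, dif_pos]
      _ = ∑ t : {x // x ∈ T}, F t := Fintype.sum_equiv o.toEquiv _ _ (fun d => rfl)
      _ = ∑ j ∈ T, F j := (Finset.sum_subtype T (fun _ => Iff.rfl) F).symm
      _ = Finset.univ.sum F := Finset.sum_subset (Finset.subset_univ T)
            (fun j _ hj => hF j hj)
  refine ⟨L', R', ?_, ?_, ?_⟩
  · ext i i'
    rw [Matrix.mul_apply, Matrix.mul_apply]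
    simp only [Matrix.transpose_apply]
    rw [← key (fun j => L i j * R i' j) (fun j hj => by simp [hL j hj i])]
    refine Finset.sum_congr rfl fun c _ => ?_
    by_cases h : (c : ℕ) < T.card
    · simp [hL', hR', dif_pos h]
    · simp [hL', hR', dif_neg h]
  · rw [sumsq, sumsq]
    refine Finset.sum_congr rfl fun i _ => ?_
    rw [← key (fun j => (L i j) ^ 2) (fun j hj => by simp [hL j hj i])]
    refine Finset.sum_congr rfl fun c _ => ?_
    by_cases h : (c : ℕ) < T.card
    · simp [hL', dif_pos h]
    · simp [hL', dif_neg h]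
  · rw [sumsq, sumsq]
    refine Finset.sum_congr rfl fun i _ => ?_
    rw [← key (fun j => (R i j) ^ 2) (fun j hj => by simp [hR j hj i])]
    refine Finset.sum_congr rfl fun c _ => ?_
    by_cases h : (c : ℕ) < T.card
    · simp [hR', dif_pos h]
    · simp [hR', dif_neg h]

/-- Any matrix factors as `L Rᵀ` with inner dimension `min n m` and cost `nucNorm X`. -/
lemma factor_exists {n m : ℕ} (X : Matrix (Fin n) (Fin m) ℝ) :
    ∃ (L : Matrix (Fin n) (Fin (min n m)) ℝ) (R : Matrix (Fin m) (Fin (min n m)) ℝ),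
      L * Rᵀ = X ∧ sumsq L = nucNorm X ∧ sumsq R = nucNorm X := by
  obtain ⟨L, R, T, hfac, hsL, hsR, hT, hLz, hRz⟩ := factor_raw X
  obtain ⟨L', R', hfac', hsL', hsR'⟩ := compress L R T hT hLz hRz
  exact ⟨L', R', hfac'.trans hfac, hsL'.trans hsL, hsR'.trans hsR⟩

lemma half_sum {a b : ℕ} (M : Matrix (Fin a) (Fin b) ℝ) :
    ∑ j, ∑ i, (1 / 2 : ℝ) * (M i j) ^ 2 = (1 / 2) * sumsq M := by
  rw [sumsq, Finset.sum_comm, Finset.mul_sum]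
  exact Finset.sum_congr rfl fun i _ => (Finset.mul_sum _ _ _).symm

/-- The key inequality: the nuclear norm of `L Rᵀ` is at most half the sum of
squared Frobenius norms of the factors. -/
lemma nucNorm_factor_le {n m k : ℕ} (L : Matrix (Fin n) (Fin k) ℝ)
    (R : Matrix (Fin m) (Fin k) ℝ) :
    nucNorm (L * Rᵀ) ≤ (1 / 2) * sumsq L + (1 / 2) * sumsq R := by
  set X : Matrix (Fin n) (Fin m) ℝ := L * Rᵀ with hX
  obtain ⟨V, μ, h1, h2, hUU, hμ, hsum, -⟩ := svd_core X
  set U : Matrix (Fin n) (Fin m) ℝ := X * V with hU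
  set g : Fin m → ℝ := fun j => if μ j = 0 then 0 else (Real.sqrt (μ j))⁻¹ with hg
  set e : Fin m → ℝ := fun j => if μ j = 0 then 0 else 1 with he
  set Uh : Matrix (Fin n) (Fin m) ℝ := U * diagonal g with hUh
  have hdmul : ∀ (f f' : Fin m → ℝ), (∀ j, f j = f' j) → diagonal f = diagonal f' :=
    fun f f' h => by rw [funext h]
  -- `Uhᵀ * U = diagonal (√μ)`
  have hUhU : Uhᵀ * U = diagonal (fun j => Real.sqrt (μ j)) := by
    rw [hUh, Matrix.transpose_mul, Matrix.diagonal_transpose, Matrix.mul_assoc, hUU,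
      Matrix.diagonal_mul_diagonal]
    refine hdmul _ _ fun j => ?_
    simp only [Pi.mul_apply, hg]
    by_cases hj : μ j = 0
    · simp [hj]
    · have hs : Real.sqrt (μ j) ≠ 0 :=
        Real.sqrt_ne_zero'.mpr ((hμ j).lt_of_ne (Ne.symm hj))
      have hss : Real.sqrt (μ j) * Real.sqrt (μ j) = μ j := Real.mul_self_sqrt (hμ j)
      rw [if_neg hj]
      field_simp
      rw [sq, hss]
  -- `Uhᵀ * Uh = diagonal e`
  have hUhUh : Uhᵀ * Uh = diagonal e := by
    rw [hUh, Matrix.transpose_mul, Matrix.diagonal_transpose, Matrix.mul_assoc,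
      ← Matrix.mul_assoc Uᵀ U (diagonal g), hUU, Matrix.diagonal_mul_diagonal,
      Matrix.diagonal_mul_diagonal]
    refine hdmul _ _ fun j => ?_
    simp only [Pi.mul_apply, hg, he]
    by_cases hj : μ j = 0
    · simp [hj]
    · have hs : Real.sqrt (μ j) ≠ 0 :=
        Real.sqrt_ne_zero'.mpr ((hμ j).lt_of_ne (Ne.symm hj))
      have hss : Real.sqrt (μ j) * Real.sqrt (μ j) = μ j := Real.mul_self_sqrt (hμ j)
      rw [if_neg hj, if_neg hj]
      field_simp
      rw [sq, hss]
  -- `Uh * diagonal e = Uh`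
  have hUhe : Uh * diagonal e = Uh := by
    rw [hUh, Matrix.mul_assoc, Matrix.diagonal_mul_diagonal]
    have hde : diagonal (fun i => g i * e i) = diagonal g := hdmul _ _ fun j => by
      simp only [Pi.mul_apply, hg, he]
      by_cases hj : μ j = 0 <;> simp [hj]
    rw [hde]
  -- the nuclear norm as a trace
  have htr : nucNorm X = trace (Uhᵀ * (X * V)) := by
    rw [← hU, hUhU, Matrix.trace_diagonal]
    exact hsum.symm
  have htr2 : Uhᵀ * (X * V) = (Lᵀ * Uh)ᵀ * (Rᵀ * V) := by
    rw [Matrix.transpose_mul Lᵀ Uh, Matrix.transpose_transpose, hX]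
    simp only [Matrix.mul_assoc]
  -- bound the trace by sums of squares
  have hbound : trace ((Lᵀ * Uh)ᵀ * (Rᵀ * V)) ≤
      (1 / 2) * sumsq (Lᵀ * Uh) + (1 / 2) * sumsq (Rᵀ * V) := by
    rw [Matrix.trace]
    have hpt : ∀ j, ((Lᵀ * Uh)ᵀ * (Rᵀ * V)).diag j ≤
        ∑ i, ((1 / 2) * ((Lᵀ * Uh) i j) ^ 2 + (1 / 2) * ((Rᵀ * V) i j) ^ 2) := by
      intro j
      rw [Matrix.diag, Matrix.mul_apply]
      refine Finset.sum_le_sum fun i _ => ?_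
      rw [Matrix.transpose_apply]
      nlinarith [sq_nonneg ((Lᵀ * Uh) i j - (Rᵀ * V) i j)]
    calc ∑ j, ((Lᵀ * Uh)ᵀ * (Rᵀ * V)).diag j
        ≤ ∑ j, ∑ i, ((1 / 2) * ((Lᵀ * Uh) i j) ^ 2 + (1 / 2) * ((Rᵀ * V) i j) ^ 2) :=
          Finset.sum_le_sum fun j _ => hpt j
      _ = (∑ j, ∑ i, (1 / 2 : ℝ) * ((Lᵀ * Uh) i j) ^ 2)
          + (∑ j, ∑ i, (1 / 2 : ℝ) * ((Rᵀ * V) i j) ^ 2) := by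
          rw [← Finset.sum_add_distrib]
          exact Finset.sum_congr rfl fun j _ => Finset.sum_add_distrib
      _ = (1 / 2) * sumsq (Lᵀ * Uh) + (1 / 2) * sumsq (Rᵀ * V) := by
          rw [half_sum, half_sum]
  -- `sumsq (Rᵀ V) = sumsq R`
  have hsRV : sumsq (Rᵀ * V) = sumsq R := by
    rw [← trace_transpose_mul (Rᵀ * V), Matrix.transpose_mul, Matrix.transpose_transpose]
    rw [show (Vᵀ * R) * (Rᵀ * V) = Vᵀ * (R * Rᵀ * V) by simp only [Matrix.mul_assoc]]
    rw [Matrix.trace_mul_comm]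
    rw [show R * Rᵀ * V * Vᵀ = R * Rᵀ * (V * Vᵀ) by simp only [Matrix.mul_assoc], h1,
      Matrix.mul_one]
    rw [Matrix.trace_mul_comm, trace_transpose_mul]
  -- `sumsq (Lᵀ Uh) ≤ sumsq L` (projection bound)
  have hproj : sumsq (Lᵀ * Uh) ≤ sumsq L := by
    set P : Matrix (Fin m) (Fin k) ℝ := Uhᵀ * L with hP
    have hLUh : Lᵀ * Uh = Pᵀ := by rw [hP, Matrix.transpose_mul, Matrix.transpose_transpose]
    have hed : diagonal e * Uhᵀ = Uhᵀ := by
      rw [← Matrix.diagonal_transpose, ← Matrix.transpose_mul, hUhe]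
    have heP : Uhᵀ * (Uh * P) = P := by
      rw [← Matrix.mul_assoc, hUhUh, hP, ← Matrix.mul_assoc, hed]
    have hexp : (L - Uh * P)ᵀ * (L - Uh * P) = Lᵀ * L - Pᵀ * P := by
      rw [Matrix.transpose_sub, Matrix.sub_mul, Matrix.mul_sub, Matrix.mul_sub,
        Matrix.transpose_mul]
      rw [show Lᵀ * (Uh * P) = Pᵀ * P from by rw [← Matrix.mul_assoc, hLUh]]
      rw [show Pᵀ * Uhᵀ * L = Pᵀ * P from by rw [Matrix.mul_assoc, ← hP]]
      rw [show Pᵀ * Uhᵀ * (Uh * P) = Pᵀ * P from by rw [Matrix.mul_assoc, heP]]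
      abel
    have h0 : 0 ≤ sumsq (L - Uh * P) := sumsq_nonneg _
    rw [← trace_transpose_mul, hexp, Matrix.trace_sub, trace_transpose_mul,
      trace_transpose_mul] at h0
    rw [hLUh, sumsq_transpose]
    linarith
  calc nucNorm X = trace (Uhᵀ * (X * V)) := htr
    _ = trace ((Lᵀ * Uh)ᵀ * (Rᵀ * V)) := by rw [htr2]
    _ ≤ (1 / 2) * sumsq (Lᵀ * Uh) + (1 / 2) * sumsq (Rᵀ * V) := hbound
    _ ≤ (1 / 2) * sumsq L + (1 / 2) * sumsq R := by rw [hsRV]; linarith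

end MorozovAux

open MorozovAux in
/-- Equality of the optimal values of the nuclear-norm Morozov problem and its
factorized version with inner dimension `k = min n m`, assuming the feasible set
is nonempty. -/
theorem morozov_factorized_value_eq (n m q : ℕ)
    (A : Matrix (Fin n) (Fin m) ℝ →ₗ[ℝ] (Fin q → ℝ)) (b : Fin q → ℝ)
    (σ : ℝ) (hσ : 0 ≤ σ)
    (hfeas : ∃ X : Matrix (Fin n) (Fin m) ℝ, l2 (A X - b) ≤ σ) :
    sInf {c : ℝ | ∃ X : Matrix (Fin n) (Fin m) ℝ, l2 (A X - b) ≤ σ ∧ c = nucNorm X} =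
      sInf {c : ℝ | ∃ (L : Matrix (Fin n) (Fin (min n m)) ℝ)
          (R : Matrix (Fin m) (Fin (min n m)) ℝ),
          l2 (A (L * Rᵀ) - b) ≤ σ ∧
          c = (1 / 2) * frobNorm L ^ 2 + (1 / 2) * frobNorm R ^ 2} := by
  obtain ⟨X₀, hX₀⟩ := hfeas
  obtain ⟨L₀, R₀, hfac₀, -, -⟩ := factor_exists X₀
  have hne1 : {c : ℝ | ∃ X : Matrix (Fin n) (Fin m) ℝ,
      l2 (A X - b) ≤ σ ∧ c = nucNorm X}.Nonempty := ⟨nucNorm X₀, X₀, hX₀, rfl⟩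
  have hne2 : {c : ℝ | ∃ (L : Matrix (Fin n) (Fin (min n m)) ℝ)
      (R : Matrix (Fin m) (Fin (min n m)) ℝ), l2 (A (L * Rᵀ) - b) ≤ σ ∧
      c = (1 / 2) * frobNorm L ^ 2 + (1 / 2) * frobNorm R ^ 2}.Nonempty :=
    ⟨_, L₀, R₀, by rw [hfac₀]; exact hX₀, rfl⟩
  have hbdd1 : BddBelow {c : ℝ | ∃ X : Matrix (Fin n) (Fin m) ℝ,
      l2 (A X - b) ≤ σ ∧ c = nucNorm X} := by
    refine ⟨0, fun c hc => ?_⟩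
    obtain ⟨X, -, rfl⟩ := hc
    exact nucNorm_nonneg X
  have hbdd2 : BddBelow {c : ℝ | ∃ (L : Matrix (Fin n) (Fin (min n m)) ℝ)
      (R : Matrix (Fin m) (Fin (min n m)) ℝ), l2 (A (L * Rᵀ) - b) ≤ σ ∧
      c = (1 / 2) * frobNorm L ^ 2 + (1 / 2) * frobNorm R ^ 2} := by
    refine ⟨0, fun c hc => ?_⟩
    obtain ⟨L, R, -, rfl⟩ := hc
    have h1 := sq_nonneg (frobNorm L)
    have h2 := sq_nonneg (frobNorm R)
    linarith
  apply le_antisymm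
  · refine le_csInf hne2 fun c hc => ?_
    obtain ⟨L, R, hfc, rfl⟩ := hc
    have h1 : nucNorm (L * Rᵀ) ∈ {c : ℝ | ∃ X : Matrix (Fin n) (Fin m) ℝ,
        l2 (A X - b) ≤ σ ∧ c = nucNorm X} := ⟨L * Rᵀ, hfc, rfl⟩
    refine (csInf_le hbdd1 h1).trans ?_
    rw [frobNorm_sq, frobNorm_sq]
    exact nucNorm_factor_le L R
  · refine le_csInf hne1 fun c hc => ?_
    obtain ⟨X, hfc, rfl⟩ := hc
    obtain ⟨L, R, hfac, hsL, hsR⟩ := factor_exists X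
    have h2 : (1 / 2) * frobNorm L ^ 2 + (1 / 2) * frobNorm R ^ 2 ∈
        {c : ℝ | ∃ (L : Matrix (Fin n) (Fin (min n m)) ℝ)
          (R : Matrix (Fin m) (Fin (min n m)) ℝ), l2 (A (L * Rᵀ) - b) ≤ σ ∧
          c = (1 / 2) * frobNorm L ^ 2 + (1 / 2) * frobNorm R ^ 2} :=
      ⟨L, R, by rw [hfac]; exact hfc, rfl⟩
    refine (csInf_le hbdd2 h2).trans_eq ?_
    rw [frobNorm_sq, frobNorm_sq, hsL, hsR]
    ring
end
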